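/- As e → 1 (from either side), α₁'(e) ~ -2 log|e - 1|, i.e. the limit of α₁'(e)/(-2 log|e-1|) as e → 1 equals 1. -/

import Mathlib

open Real Set Filter Topology

noncomputable def theta1 (e : ℝ) : ℝ := Real.arccos (-e)

/-- α₁'(e) = 2√2 ∫₀^{θ₁(e)} (e + cos θ)^{-1/2} dθ. -/
noncomputable def dalpha1 (e : ℝ) : ℝ :=
  2 * Real.sqrt 2 * ∫ θ in (0:ℝ)..(theta1 e), 1 / Real.sqrt (e + Real.cos θ)

open MeasureTheory

lemma hasDerivAt_G (e θ : ℝ) (h1 : 0 < e + Real.cos θ) (h2 : 0 < 1 + Real.cos θ) :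
    HasDerivAt (fun t => -2 * Real.log (Real.sqrt (e + Real.cos t) + Real.sqrt (1 + Real.cos t)))
      (Real.sin θ / (Real.sqrt (e + Real.cos θ) * Real.sqrt (1 + Real.cos θ))) θ := by
  have hA : HasDerivAt (fun t => e + Real.cos t) (-Real.sin θ) θ :=
    (Real.hasDerivAt_cos θ).const_add e
  have hB : HasDerivAt (fun t => 1 + Real.cos t) (-Real.sin θ) θ :=
    (Real.hasDerivAt_cos θ).const_add 1
  have hsA : HasDerivAt (fun t => Real.sqrt (e + Real.cos t))
      (-Real.sin θ / (2 * Real.sqrt (e + Real.cos θ))) θ := hA.sqrt h1.ne'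
  have hsB : HasDerivAt (fun t => Real.sqrt (1 + Real.cos t))
      (-Real.sin θ / (2 * Real.sqrt (1 + Real.cos θ))) θ := hB.sqrt h2.ne'
  have hS := hsA.add hsB
  have ha : 0 < Real.sqrt (e + Real.cos θ) := Real.sqrt_pos.2 h1
  have hb : 0 < Real.sqrt (1 + Real.cos θ) := Real.sqrt_pos.2 h2
  have hSne : Real.sqrt (e + Real.cos θ) + Real.sqrt (1 + Real.cos θ) ≠ 0 := by positivity
  have hlog : HasDerivAt
      (fun t => -2 * Real.log (Real.sqrt (e + Real.cos t) + Real.sqrt (1 + Real.cos t)))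
      (-2 * ((-Real.sin θ / (2 * Real.sqrt (e + Real.cos θ))
        + -Real.sin θ / (2 * Real.sqrt (1 + Real.cos θ)))
        / (Real.sqrt (e + Real.cos θ) + Real.sqrt (1 + Real.cos θ)))) θ :=
    (hS.log hSne).const_mul (-2 : ℝ)
  convert hlog using 1
  have h2' : Real.sqrt (1 + Real.cos θ) ^ 2 = 1 + Real.cos θ := Real.sq_sqrt h2.le
  have h1' : Real.sqrt (e + Real.cos θ) ^ 2 = e + Real.cos θ := Real.sq_sqrt h1.le
  field_simp
  ring

lemma sin_eq_sqrt_mul {θ : ℝ} (h0 : 0 ≤ θ) (hπ : θ ≤ π) :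
    Real.sin θ = Real.sqrt (1 - Real.cos θ) * Real.sqrt (1 + Real.cos θ) := by
  rw [← Real.sqrt_mul (by nlinarith [Real.neg_one_le_cos θ, Real.cos_le_one θ] :
    (0:ℝ) ≤ 1 - Real.cos θ)]
  rw [show (1 - Real.cos θ) * (1 + Real.cos θ) = Real.sin θ ^ 2 by rw [Real.sin_sq]; ring]
  exact (Real.sqrt_sq (Real.sin_nonneg_of_nonneg_of_le_pi h0 hπ)).symm

lemma main_bounds (a e : ℝ) (ha1 : π/2 ≤ a) (ha2 : a < π)
    (he : e ≠ 1) (he1 : |e - 1| < 1/2) (he2 : |e - 1| < (1 + Real.cos a)/2)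
    (hT : a < theta1 e) :
    1 - (-2 * Real.log (Real.sqrt (e + Real.cos a) + Real.sqrt (1 + Real.cos a)))
        * (-Real.log |e-1|)⁻¹
      ≤ dalpha1 e / (-2 * Real.log |e - 1|) ∧
    dalpha1 e / (-2 * Real.log |e - 1|)
      ≤ (Real.sqrt 2 / Real.sqrt (1 - Real.cos a)) *
          (1 - (-2 * Real.log (Real.sqrt (e + Real.cos a) + Real.sqrt (1 + Real.cos a)))
            * (-Real.log |e-1|)⁻¹)
        + Real.sqrt 2 * (a * (Real.sqrt ((1 + Real.cos a)/2))⁻¹) * (-Real.log |e-1|)⁻¹ := by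
  have hπ : (0:ℝ) < π := Real.pi_pos
  have ha0 : 0 < a := lt_of_lt_of_le (by positivity) ha1
  set T := theta1 e with hTdef
  have hTπ : T ≤ π := Real.arccos_le_pi _
  have haT : a < T := hT
  have habs : (0:ℝ) < |e - 1| := abs_pos.2 (sub_ne_zero.2 he)
  obtain ⟨heL, heU⟩ := abs_lt.1 he1
  -- cos a facts
  have hcosa_pi : Real.cos π < Real.cos a :=
    Real.strictAntiOn_cos ⟨ha0.le, ha2.le⟩ ⟨hπ.le, le_refl _⟩ ha2
  have hca : 0 < 1 + Real.cos a := by rw [Real.cos_pi] at hcosa_pi; linarith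
  have hcosa_np : Real.cos a ≤ 0 :=
    Real.cos_nonpos_of_pi_div_two_le_of_le ha1 (by linarith)
  have hs1 : (1:ℝ) ≤ Real.sqrt (1 - Real.cos a) := by
    have h := Real.sqrt_le_sqrt (show (1:ℝ) ≤ 1 - Real.cos a by linarith)
    simpa using h
  have hs0 : 0 < Real.sqrt (1 - Real.cos a) := lt_of_lt_of_le one_pos hs1
  have heca : (1 + Real.cos a)/2 ≤ e + Real.cos a := by
    have := abs_lt.1 he2; linarith [this.1]
  have heca0 : 0 < e + Real.cos a := lt_of_lt_of_le (by linarith) heca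
  -- L
  set L := -Real.log |e - 1| with hLdef
  have hL : 0 < L := by
    have : Real.log |e - 1| < 0 := Real.log_neg habs (by linarith)
    simp only [hLdef]; linarith
  -- cos T facts
  have hcosT : 0 ≤ e + Real.cos T ∧ 0 ≤ 1 + Real.cos T ∧
      Real.sqrt (e + Real.cos T) + Real.sqrt (1 + Real.cos T) = Real.sqrt |e - 1| := by
    rcases lt_or_gt_of_ne he with hlt | hgt
    · have hcos : Real.cos T = -e := Real.cos_arccos (by linarith) (by linarith)
      have habs' : |e - 1| = 1 - e := by rw [abs_of_neg (by linarith)]; ring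
      refine ⟨by rw [hcos]; ring_nf; exact le_refl _, by rw [hcos]; linarith, ?_⟩
      rw [hcos, habs', show e + -e = 0 by ring, Real.sqrt_zero, show 1 + -e = 1 - e by ring,
        zero_add]
    · have hTpi : T = π := by
        rw [hTdef, theta1, Real.arccos_eq_pi]; linarith
      have habs' : |e - 1| = e - 1 := abs_of_pos (by linarith)
      rw [hTpi, Real.cos_pi, habs']
      refine ⟨by linarith, by linarith, ?_⟩
      rw [show (1:ℝ) + -1 = 0 by ring, Real.sqrt_zero, show e + -1 = e - 1 by ring, add_zero]
  obtain ⟨hcT1, hcT2, hcT3⟩ := hcosT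
  -- monotonicity of cos on [0, T]
  have hmono : ∀ θ ∈ Icc a T, Real.cos T ≤ Real.cos θ := fun θ hθ =>
    Real.cos_le_cos_of_nonneg_of_le_pi (by linarith [hθ.1]) hTπ hθ.2
  have hpos1 : ∀ θ ∈ Ioo a T, 0 < e + Real.cos θ := by
    intro θ hθ
    have h1 : Real.cos T < Real.cos θ := Real.strictAntiOn_cos
      (⟨by linarith [hθ.1], by linarith [hθ.2]⟩ : θ ∈ Icc 0 π) ⟨by linarith, hTπ⟩ hθ.2
    linarith
  have hpos2 : ∀ θ ∈ Ioo a T, 0 < 1 + Real.cos θ := by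
    intro θ hθ
    have hθπ : θ < π := lt_of_lt_of_le hθ.2 hTπ
    have h1 : Real.cos π < Real.cos θ := Real.strictAntiOn_cos
      (⟨by linarith [hθ.1], hθπ.le⟩ : θ ∈ Icc 0 π) ⟨hπ.le, le_refl _⟩ hθπ
    rw [Real.cos_pi] at h1; linarith
  set G : ℝ → ℝ := fun t => -2 * Real.log (Real.sqrt (e + Real.cos t) + Real.sqrt (1 + Real.cos t))
    with hGdef
  set g : ℝ → ℝ := fun θ => Real.sin θ / (Real.sqrt (e + Real.cos θ) * Real.sqrt (1 + Real.cos θ))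
    with hgdef
  set f : ℝ → ℝ := fun θ => 1 / Real.sqrt (e + Real.cos θ) with hfdef
  -- continuity of G on Icc a T
  have hSlb : ∀ θ ∈ Icc a T,
      Real.sqrt |e - 1| ≤ Real.sqrt (e + Real.cos θ) + Real.sqrt (1 + Real.cos θ) := by
    intro θ hθ
    rw [← hcT3]
    exact add_le_add (Real.sqrt_le_sqrt (by linarith [hmono θ hθ]))
      (Real.sqrt_le_sqrt (by linarith [hmono θ hθ]))
  have hSne : ∀ θ ∈ Icc a T,
      Real.sqrt (e + Real.cos θ) + Real.sqrt (1 + Real.cos θ) ≠ 0 := by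
    intro θ hθ
    have := hSlb θ hθ
    have h0 : 0 < Real.sqrt |e - 1| := Real.sqrt_pos.2 habs
    linarith
  have hGcont : ContinuousOn G (Icc a T) := by
    apply ContinuousOn.mul continuousOn_const
    apply ContinuousOn.log
    · exact ((Real.continuous_sqrt.comp (continuous_const.add Real.continuous_cos)).add
        (Real.continuous_sqrt.comp (continuous_const.add Real.continuous_cos))).continuousOn
    · exact hSne
  have hGa : G T = L := by
    rw [hGdef]
    simp only
    rw [hcT3, Real.log_sqrt (abs_nonneg _), hLdef]
    ring
  -- derivative
  have hderiv : ∀ θ ∈ Ioo a T, HasDerivAt G (g θ) θ := fun θ hθ =>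
    hasDerivAt_G e θ (hpos1 θ hθ) (hpos2 θ hθ)
  have hgnn : ∀ θ ∈ Ioo a T, 0 ≤ g θ := by
    intro θ hθ
    have hsin : 0 ≤ Real.sin θ :=
      Real.sin_nonneg_of_nonneg_of_le_pi (by linarith [hθ.1]) (le_trans hθ.2.le hTπ)
    exact div_nonneg hsin (mul_nonneg (Real.sqrt_nonneg _) (Real.sqrt_nonneg _))
  have hgint : IntegrableOn g (Ioc a T) :=
    intervalIntegral.integrableOn_deriv_of_nonneg hGcont hderiv hgnn
  have hgII : IntervalIntegrable g volume a T :=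
    (intervalIntegrable_iff_integrableOn_Ioc_of_le haT.le).2 hgint
  have hgval : ∫ θ in a..T, g θ = L - G a := by
    rw [intervalIntegral.integral_eq_sub_of_hasDeriv_right_of_le haT.le hGcont
      (fun θ hθ => (hderiv θ hθ).hasDerivWithinAt) hgII, hGa]
  -- pointwise comparison
  have hfg : ∀ θ ∈ Ioo a T, g θ = Real.sqrt (1 - Real.cos θ) * f θ := by
    intro θ hθ
    have h0θ : 0 ≤ θ := by linarith [hθ.1]
    have hθπ : θ ≤ π := le_trans hθ.2.le hTπ
    have hb : 0 < Real.sqrt (1 + Real.cos θ) := Real.sqrt_pos.2 (hpos2 θ hθ)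
    have hA : 0 < Real.sqrt (e + Real.cos θ) := Real.sqrt_pos.2 (hpos1 θ hθ)
    rw [hgdef, hfdef]
    simp only
    rw [sin_eq_sqrt_mul h0θ hθπ]
    field_simp
  have hs2 : ∀ θ ∈ Ioo a T, Real.sqrt (1 - Real.cos a) ≤ Real.sqrt (1 - Real.cos θ) ∧
      Real.sqrt (1 - Real.cos θ) ≤ Real.sqrt 2 := by
    intro θ hθ
    constructor
    · apply Real.sqrt_le_sqrt
      have : Real.cos θ ≤ Real.cos a :=
        Real.cos_le_cos_of_nonneg_of_le_pi ha0.le (le_trans hθ.2.le hTπ) hθ.1.le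
      linarith
    · exact Real.sqrt_le_sqrt (by linarith [Real.neg_one_le_cos θ])
  have hfnn : ∀ θ, 0 ≤ f θ := fun θ => by rw [hfdef]; positivity
  have hlow : ∀ θ ∈ Ioo a T, (Real.sqrt 2)⁻¹ * g θ ≤ f θ := by
    intro θ hθ
    have h2 : (0:ℝ) < Real.sqrt 2 := by positivity
    rw [hfg θ hθ]
    calc (Real.sqrt 2)⁻¹ * (Real.sqrt (1 - Real.cos θ) * f θ)
        ≤ (Real.sqrt 2)⁻¹ * (Real.sqrt 2 * f θ) :=
          mul_le_mul_of_nonneg_left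
            (mul_le_mul_of_nonneg_right (hs2 θ hθ).2 (hfnn θ)) (by positivity)
      _ = f θ := by field_simp
  have hupp : ∀ θ ∈ Ioo a T, f θ ≤ (Real.sqrt (1 - Real.cos a))⁻¹ * g θ := by
    intro θ hθ
    rw [hfg θ hθ]
    calc f θ = (Real.sqrt (1 - Real.cos a))⁻¹ * (Real.sqrt (1 - Real.cos a) * f θ) := by
          field_simp
      _ ≤ (Real.sqrt (1 - Real.cos a))⁻¹ * (Real.sqrt (1 - Real.cos θ) * f θ) :=
          mul_le_mul_of_nonneg_left
            (mul_le_mul_of_nonneg_right (hs2 θ hθ).1 (hfnn θ)) (by positivity)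
  -- integrability of f
  have hfmeas : Measurable f := by
    rw [hfdef]
    exact measurable_const.div
      (Real.continuous_sqrt.measurable.comp (continuous_const.add Real.continuous_cos).measurable)
  have hgIoo : IntegrableOn g (Ioo a T) := hgint.mono_set Ioo_subset_Ioc_self
  have hfIoo : IntegrableOn f (Ioo a T) := by
    apply Integrable.mono' (hgIoo.const_mul (Real.sqrt (1 - Real.cos a))⁻¹)
      hfmeas.aestronglyMeasurable
    filter_upwards [ae_restrict_mem measurableSet_Ioo] with θ hθ
    rw [Real.norm_of_nonneg (hfnn θ)]
    exact hupp θ hθ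
  have hfIoc : IntegrableOn f (Ioc a T) := by
    rwa [integrableOn_Ioc_iff_integrableOn_Ioo]
  have hfII2 : IntervalIntegrable f volume a T :=
    (intervalIntegrable_iff_integrableOn_Ioc_of_le haT.le).2 hfIoc
  have hcont0a : ContinuousOn f (Icc 0 a) := by
    rw [hfdef]
    apply ContinuousOn.div continuousOn_const
      ((Real.continuous_sqrt.comp (continuous_const.add Real.continuous_cos)).continuousOn)
    intro θ hθ
    have : Real.cos a ≤ Real.cos θ := Real.cos_le_cos_of_nonneg_of_le_pi hθ.1 ha2.le hθ.2
    exact (Real.sqrt_pos.2 (show 0 < e + Real.cos θ by linarith)).ne'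
  have hfII1 : IntervalIntegrable f volume 0 a := by
    apply ContinuousOn.intervalIntegrable
    rwa [uIcc_of_le ha0.le]
  -- bounds on [a,T]
  have hIooInt : ∀ h : ℝ → ℝ, (∫ θ in a..T, h θ) = ∫ θ in Ioo a T, h θ := by
    intro h
    rw [intervalIntegral.integral_of_le haT.le, MeasureTheory.integral_Ioc_eq_integral_Ioo]
  have hmid_low : (Real.sqrt 2)⁻¹ * (L - G a) ≤ ∫ θ in a..T, f θ := by
    rw [← hgval, hIooInt f, hIooInt g, ← MeasureTheory.integral_const_mul]
    exact MeasureTheory.setIntegral_mono_on (hgIoo.const_mul _) hfIoo measurableSet_Ioo hlow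
  have hmid_upp : (∫ θ in a..T, f θ) ≤ (Real.sqrt (1 - Real.cos a))⁻¹ * (L - G a) := by
    rw [← hgval, hIooInt f, hIooInt g, ← MeasureTheory.integral_const_mul]
    exact MeasureTheory.setIntegral_mono_on hfIoo (hgIoo.const_mul _) measurableSet_Ioo hupp
  -- bounds on [0,a]
  have hR_low : 0 ≤ ∫ θ in (0:ℝ)..a, f θ :=
    intervalIntegral.integral_nonneg ha0.le fun θ _ => hfnn θ
  have hR_upp : (∫ θ in (0:ℝ)..a, f θ) ≤ a * (Real.sqrt ((1 + Real.cos a)/2))⁻¹ := by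
    have hconst : (∫ _ in (0:ℝ)..a, (Real.sqrt ((1 + Real.cos a)/2))⁻¹)
        = a * (Real.sqrt ((1 + Real.cos a)/2))⁻¹ := by
      rw [intervalIntegral.integral_const, smul_eq_mul, sub_zero]
    rw [← hconst]
    apply intervalIntegral.integral_mono_on ha0.le hfII1 intervalIntegrable_const
    intro θ hθ
    have hc : Real.cos a ≤ Real.cos θ := Real.cos_le_cos_of_nonneg_of_le_pi hθ.1 ha2.le hθ.2
    rw [hfdef]
    simp only [one_div]
    apply inv_anti₀ (Real.sqrt_pos.2 (by linarith))
    exact Real.sqrt_le_sqrt (by linarith)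
  -- split
  have hsplit : (∫ θ in (0:ℝ)..T, f θ) = (∫ θ in (0:ℝ)..a, f θ) + ∫ θ in a..T, f θ :=
    (intervalIntegral.integral_add_adjacent_intervals hfII1 hfII2).symm
  have hda : dalpha1 e = 2 * Real.sqrt 2 * ∫ θ in (0:ℝ)..T, f θ := rfl
  have hden : -2 * Real.log |e - 1| = 2 * L := by rw [hLdef]; ring
  have h2pos : (0:ℝ) < Real.sqrt 2 := by positivity
  constructor
  · rw [hda, hden, le_div_iff₀ (by linarith)]
    have key : L - G a ≤ Real.sqrt 2 * ∫ θ in (0:ℝ)..T, f θ := by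
      have h3 := mul_le_mul_of_nonneg_left hmid_low h2pos.le
      rw [← mul_assoc, mul_inv_cancel₀ h2pos.ne', one_mul] at h3
      have h4 := mul_le_mul_of_nonneg_left
        (show (∫ θ in a..T, f θ) ≤ ∫ θ in (0:ℝ)..T, f θ by rw [hsplit]; linarith) h2pos.le
      linarith
    have hexp : (1 - G a * L⁻¹) * (2 * L) = 2 * (L - G a) := by
      field_simp
    rw [hexp]
    linarith [key]
  · rw [hda, hden, div_le_iff₀ (by linarith)]
    have hIub : (∫ θ in (0:ℝ)..T, f θ)
        ≤ a * (Real.sqrt ((1 + Real.cos a)/2))⁻¹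
          + (Real.sqrt (1 - Real.cos a))⁻¹ * (L - G a) := by
      rw [hsplit]; linarith
    have key := mul_le_mul_of_nonneg_left hIub (by positivity : (0:ℝ) ≤ 2 * Real.sqrt 2)
    have hexp : ((Real.sqrt 2 / Real.sqrt (1 - Real.cos a)) * (1 - G a * L⁻¹)
        + Real.sqrt 2 * (a * (Real.sqrt ((1 + Real.cos a)/2))⁻¹) * L⁻¹) * (2 * L)
        = 2 * Real.sqrt 2 * (a * (Real.sqrt ((1 + Real.cos a)/2))⁻¹
          + (Real.sqrt (1 - Real.cos a))⁻¹ * (L - G a)) := by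
      field_simp
      ring
    rw [hexp]
    linarith [key]

/-- α₁'(e) ~ -2 log|e-1| as e → 1, i.e.
α₁'(e)/(-2 log|e-1|) → 1 as e → 1 (from either side). -/
theorem dalpha1_log_asymptotics :
    Tendsto (fun e : ℝ => dalpha1 e / (-2 * Real.log |e - 1|)) (𝓝[≠] 1) (𝓝 1) := by
  rw [Metric.tendsto_nhds]
  intro ε hε
  -- choose the cutoff point a
  obtain ⟨a, ha1, ha2, has⟩ : ∃ a : ℝ, π/2 ≤ a ∧ a < π ∧
      Real.sqrt 2 / Real.sqrt (1 - Real.cos a) < 1 + ε/4 := by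
    have hπ : (0:ℝ) < π := Real.pi_pos
    have hcont : ContinuousAt (fun x : ℝ => Real.sqrt 2 / Real.sqrt (1 - Real.cos x)) π := by
      apply ContinuousAt.div continuousAt_const
        (Real.continuous_sqrt.comp (continuous_const.sub Real.continuous_cos)).continuousAt
      show Real.sqrt (1 - Real.cos π) ≠ 0
      rw [Real.cos_pi, show (1:ℝ) - -1 = 2 by norm_num]
      positivity
    have hval : Real.sqrt 2 / Real.sqrt (1 - Real.cos π) = 1 := by
      rw [Real.cos_pi, show (1:ℝ) - -1 = 2 by norm_num]
      exact div_self (by positivity)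
    have htend : Tendsto (fun x : ℝ => Real.sqrt 2 / Real.sqrt (1 - Real.cos x)) (𝓝[<] π)
        (𝓝 1) := by
      have := hcont.tendsto.mono_left (nhdsWithin_le_nhds (s := Iio π))
      rwa [hval] at this
    have h1 := htend.eventually_lt_const (by linarith : (1:ℝ) < 1 + ε/4)
    have h2 : ∀ᶠ x in 𝓝[<] π, π/2 ≤ x :=
      (eventually_ge_nhds (by linarith : π/2 < π)).filter_mono nhdsWithin_le_nhds
    have h3 : ∀ᶠ x in 𝓝[<] π, x < π := eventually_mem_nhdsWithin
    obtain ⟨a, haa, hab, hac⟩ := (h2.and (h3.and h1)).exists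
    exact ⟨a, haa, hab, hac⟩
  have hπ : (0:ℝ) < π := Real.pi_pos
  have ha0 : 0 < a := lt_of_lt_of_le (by positivity) ha1
  have hcosa_pi : Real.cos π < Real.cos a :=
    Real.strictAntiOn_cos (⟨ha0.le, ha2.le⟩ : a ∈ Icc 0 π) ⟨hπ.le, le_refl _⟩ ha2
  have hca : 0 < 1 + Real.cos a := by rw [Real.cos_pi] at hcosa_pi; linarith
  have hcosa_np : Real.cos a ≤ 0 :=
    Real.cos_nonpos_of_pi_div_two_le_of_le ha1 (by linarith)
  have hs0 : 0 < Real.sqrt (1 - Real.cos a) := Real.sqrt_pos.2 (by linarith)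
  -- limits along the filter
  have habs0 : Tendsto (fun e : ℝ => |e - 1|) (𝓝[≠] 1) (𝓝 0) := by
    have : Tendsto (fun e : ℝ => |e - 1|) (𝓝 1) (𝓝 |1 - 1|) :=
      ((continuous_id.sub continuous_const).abs).tendsto 1
    simpa using this.mono_left nhdsWithin_le_nhds
  have hLinf : Tendsto (fun e : ℝ => -Real.log |e - 1|) (𝓝[≠] 1) atTop := by
    have h1 : Tendsto (fun e : ℝ => |e - 1|) (𝓝[≠] 1) (𝓝[>] 0) := by
      rw [tendsto_nhdsWithin_iff]
      refine ⟨habs0, ?_⟩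
      filter_upwards [self_mem_nhdsWithin] with e he
      exact abs_pos.2 (sub_ne_zero.2 he)
    have h2 : Tendsto (fun e : ℝ => Real.log |e - 1|) (𝓝[≠] 1) atBot :=
      Real.tendsto_log_nhdsGT_zero.comp h1
    exact tendsto_neg_atBot_atTop.comp h2
  have hLinv : Tendsto (fun e : ℝ => (-Real.log |e - 1|)⁻¹) (𝓝[≠] 1) (𝓝 0) :=
    hLinf.inv_tendsto_atTop
  have hC : Tendsto
      (fun e : ℝ => -2 * Real.log (Real.sqrt (e + Real.cos a) + Real.sqrt (1 + Real.cos a)))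
      (𝓝[≠] 1)
      (𝓝 (-2 * Real.log (Real.sqrt (1 + Real.cos a) + Real.sqrt (1 + Real.cos a)))) := by
    have hne : Real.sqrt (1 + Real.cos a) + Real.sqrt (1 + Real.cos a) ≠ 0 := by
      have := Real.sqrt_pos.2 hca; positivity
    have hc1 : Continuous (fun e : ℝ => Real.sqrt (e + Real.cos a) + Real.sqrt (1 + Real.cos a)) :=
      (Real.continuous_sqrt.comp (continuous_id.add continuous_const)).add continuous_const
    have hcont : ContinuousAt
        (fun e : ℝ => -2 * Real.log (Real.sqrt (e + Real.cos a) + Real.sqrt (1 + Real.cos a)))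
        1 := continuousAt_const.mul (hc1.continuousAt.log hne)
    exact hcont.tendsto.mono_left nhdsWithin_le_nhds
  have hlowt : Tendsto (fun e : ℝ =>
      1 - (-2 * Real.log (Real.sqrt (e + Real.cos a) + Real.sqrt (1 + Real.cos a)))
        * (-Real.log |e - 1|)⁻¹) (𝓝[≠] 1) (𝓝 1) := by
    have := tendsto_const_nhds (x := (1:ℝ)) (f := 𝓝[≠] (1:ℝ)) |>.sub (hC.mul hLinv)
    simpa using this
  have huppt : Tendsto (fun e : ℝ =>
      (Real.sqrt 2 / Real.sqrt (1 - Real.cos a)) *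
        (1 - (-2 * Real.log (Real.sqrt (e + Real.cos a) + Real.sqrt (1 + Real.cos a)))
          * (-Real.log |e - 1|)⁻¹)
      + Real.sqrt 2 * (a * (Real.sqrt ((1 + Real.cos a)/2))⁻¹) * (-Real.log |e - 1|)⁻¹)
      (𝓝[≠] 1) (𝓝 (Real.sqrt 2 / Real.sqrt (1 - Real.cos a))) := by
    have h1 := hlowt.const_mul (Real.sqrt 2 / Real.sqrt (1 - Real.cos a))
    have h2 := hLinv.const_mul (Real.sqrt 2 * (a * (Real.sqrt ((1 + Real.cos a)/2))⁻¹))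
    have := h1.add h2
    simpa using this
  -- eventual facts
  have hE1 : ∀ᶠ e in 𝓝[≠] (1:ℝ), e ≠ 1 := by
    filter_upwards [self_mem_nhdsWithin] with e he using he
  have hE2 : ∀ᶠ e in 𝓝[≠] (1:ℝ), |e - 1| < 1/2 :=
    habs0.eventually_lt_const (by norm_num)
  have hE3 : ∀ᶠ e in 𝓝[≠] (1:ℝ), |e - 1| < (1 + Real.cos a)/2 :=
    habs0.eventually_lt_const (by linarith)
  have hE4 : ∀ᶠ e in 𝓝[≠] (1:ℝ), a < theta1 e := by
    have hct : ContinuousAt (fun e : ℝ => Real.arccos (-e)) 1 :=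
      Real.continuous_arccos.continuousAt.comp continuous_neg.continuousAt
    have : Tendsto (fun e : ℝ => theta1 e) (𝓝[≠] 1) (𝓝 π) := by
      have := hct.tendsto.mono_left (nhdsWithin_le_nhds (s := {(1:ℝ)}ᶜ))
      simpa [theta1, Real.arccos_neg_one] using this
    exact this.eventually_const_lt ha2
  have hE5 := hlowt.eventually_const_lt (by linarith : 1 - ε < 1)
  have hE6 := huppt.eventually_lt_const (by linarith : Real.sqrt 2 / Real.sqrt (1 - Real.cos a)
    < 1 + ε/2)
  filter_upwards [hE1, hE2, hE3, hE4, hE5, hE6] with e he1 he2 he3 he4 he5 he6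
  obtain ⟨hlb, hub⟩ := main_bounds a e ha1 ha2 he1 he2 he3 he4
  rw [Real.dist_eq, abs_lt]
  constructor
  · linarith
  · linarith
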